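/- Let t ∈ ℝ and s ≥ 1 a natural number. Then the following are equivalent: (a) for every i with 1 ≤ i ≤ s, the span of {deriv γ t, iteratedDeriv 2 γ t, …, iteratedDeriv i γ t} is one-dimensional; (b) iteratedDeriv j κ1 t = 0 and iteratedDeriv j κ2 t = 0 for all j with 0 ≤ j ≤ s − 2. Moreover, if these conditions hold, then iteratedDeriv (s+1) γ t = iteratedDeriv (s−1) κ1 t • e2 t + iteratedDeriv (s−1) κ2 t • e3 t. -/

import Mathlib

open scoped RealInnerProductSpace

lemma iteratedDeriv_add' {F : Type*} [NormedAddCommGroup F] [NormedSpace ℝ F]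
    {f g : ℝ → F} (hf : ContDiff ℝ (⊤ : ℕ∞) f) (hg : ContDiff ℝ (⊤ : ℕ∞) g)
    (n : ℕ) (x : ℝ) :
    iteratedDeriv n (fun y => f y + g y) x = iteratedDeriv n f x + iteratedDeriv n g x := by
  simp_rw [← iteratedDerivWithin_univ]
  exact iteratedDerivWithin_add (Set.mem_univ x) uniqueDiffOn_univ
    (hf.contDiffWithinAt.of_le (by exact_mod_cast (le_top : (n : ℕ∞) ≤ ⊤))) (hg.contDiffWithinAt.of_le (by exact_mod_cast (le_top : (n : ℕ∞) ≤ ⊤)))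

lemma leibniz_smul {F : Type*} [NormedAddCommGroup F] [NormedSpace ℝ F] :
    ∀ (n : ℕ) (f : ℝ → ℝ) (g : ℝ → F), ContDiff ℝ (⊤ : ℕ∞) f → ContDiff ℝ (⊤ : ℕ∞) g → ∀ x : ℝ,
    iteratedDeriv n (fun y => f y • g y) x
      = ∑ m ∈ Finset.range (n+1),
          (n.choose m : ℝ) • (iteratedDeriv m f x • iteratedDeriv (n-m) g x) := by
  intro n
  induction n with
  | zero => intro f g hf hg x; simp
  | succ n IH =>
    intro f g hf hg x
    have hdf : ContDiff ℝ (⊤ : ℕ∞) (deriv f) := (contDiff_infty_iff_deriv.mp hf).2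
    have hdg : ContDiff ℝ (⊤ : ℕ∞) (deriv g) := (contDiff_infty_iff_deriv.mp hg).2
    have h1 : deriv (fun y => f y • g y)
        = fun y => (deriv f y • g y) + (f y • deriv g y) := by
      funext y
      rw [deriv_fun_smul ((hf.differentiable (by simp)) y) ((hg.differentiable (by simp)) y)]
      abel
    rw [iteratedDeriv_succ', h1,
      iteratedDeriv_add' (f := fun y => deriv f y • g y) (g := fun y => f y • deriv g y) (hdf.smul hg) (hf.smul hdg) n x,
      IH (deriv f) g hdf hg x, IH f (deriv g) hf hdg x]
    have ef : ∀ m, iteratedDeriv m (deriv f) x = iteratedDeriv (m+1) f x := by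
      intro m; rw [iteratedDeriv_succ']
    have eg : ∀ m, iteratedDeriv m (deriv g) x = iteratedDeriv (m+1) g x := by
      intro m; rw [iteratedDeriv_succ']
    set T : ℕ → F := fun m => iteratedDeriv m f x • iteratedDeriv (n+1-m) g x with hT
    have hA : ∑ m ∈ Finset.range (n+1),
        (n.choose m : ℝ) • (iteratedDeriv m (deriv f) x • iteratedDeriv (n-m) g x)
        = ∑ m ∈ Finset.range (n+1), (n.choose m : ℝ) • T (m+1) := by
      refine Finset.sum_congr rfl fun m hm => ?_
      have hmn : m ≤ n := Nat.lt_succ_iff.mp (Finset.mem_range.mp hm)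
      have h' : n + 1 - (m+1) = n - m := by omega
      rw [ef m, hT]
      simp only [h']
    have hB : ∑ m ∈ Finset.range (n+1),
        (n.choose m : ℝ) • (iteratedDeriv m f x • iteratedDeriv (n-m) (deriv g) x)
        = ∑ m ∈ Finset.range (n+1), (n.choose m : ℝ) • T m := by
      refine Finset.sum_congr rfl fun m hm => ?_
      have hmn : m ≤ n := Nat.lt_succ_iff.mp (Finset.mem_range.mp hm)
      have h' : n - m + 1 = n + 1 - m := by omega
      rw [eg (n-m), h', hT]
    rw [hA, hB]
    have key : (∑ m ∈ Finset.range (n+2), (((n+1).choose m : ℕ) : ℝ) • T m)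
        = (∑ m ∈ Finset.range (n+1), (n.choose m : ℝ) • T (m+1))
          + ∑ m ∈ Finset.range (n+1), (n.choose m : ℝ) • T m := by
      rw [Finset.sum_range_succ' (fun m => (((n+1).choose m : ℕ) : ℝ) • T m)]
      simp_rw [Nat.choose_succ_succ, Nat.cast_add, add_smul, Finset.sum_add_distrib]
      have h2 : ∑ m ∈ Finset.range (n+1), ((n.choose (m+1) : ℕ) : ℝ) • T (m+1)
          + (((n+1).choose 0 : ℕ) : ℝ) • T 0
          = ∑ m ∈ Finset.range (n+1), (n.choose m : ℝ) • T m := by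
        have h0 : (((n+1).choose 0 : ℕ) : ℝ) • T 0 = ((n.choose 0 : ℕ) : ℝ) • T 0 := by simp
        rw [h0, ← Finset.sum_range_succ' (fun m => ((n.choose m : ℕ) : ℝ) • T m),
          Finset.sum_range_succ]
        simp
      rw [add_assoc, h2]
    exact key.symm

noncomputable def cross3 (u v : EuclideanSpace ℝ (Fin 3)) : EuclideanSpace ℝ (Fin 3) :=
  (WithLp.equiv 2 (Fin 3 → ℝ)).symm
    ![u 1 * v 2 - u 2 * v 1, u 2 * v 0 - u 0 * v 2, u 0 * v 1 - u 1 * v 0]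

noncomputable def det3 (u v w : EuclideanSpace ℝ (Fin 3)) : ℝ :=
  Matrix.det (Matrix.of (fun i j => ![u, v, w] j i))

theorem stmt14
    (γ e1 e2 e3 : ℝ → EuclideanSpace ℝ (Fin 3)) (κ1 κ2 κ3 : ℝ → ℝ)
    (hγ : ContDiff ℝ (⊤ : ℕ∞) γ)
    (he1s : ContDiff ℝ (⊤ : ℕ∞) e1) (he2s : ContDiff ℝ (⊤ : ℕ∞) e2)
    (he3s : ContDiff ℝ (⊤ : ℕ∞) e3)
    (hκ1s : ContDiff ℝ (⊤ : ℕ∞) κ1) (hκ2s : ContDiff ℝ (⊤ : ℕ∞) κ2)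
    (hκ3s : ContDiff ℝ (⊤ : ℕ∞) κ3)
    (he1 : e1 = deriv γ)
    (hON : ∀ t, Orthonormal ℝ ![e1 t, e2 t, e3 t])
    (hor : ∀ t, e3 t = cross3 (e1 t) (e2 t))
    (hE1 : ∀ t, deriv e1 t = κ1 t • e2 t + κ2 t • e3 t)
    (hE2 : ∀ t, deriv e2 t = (-(κ1 t)) • e1 t + κ3 t • e3 t)
    (hE3 : ∀ t, deriv e3 t = (-(κ2 t)) • e1 t - κ3 t • e2 t)
    (t : ℝ) (s : ℕ) (hs : 1 ≤ s) :
    ((∀ i : ℕ, 1 ≤ i → i ≤ s →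
        Module.finrank ℝ
          (Submodule.span ℝ ((fun k => iteratedDeriv k γ t) '' Set.Icc 1 i)) = 1)
      ↔ (∀ j : ℕ, j + 2 ≤ s → iteratedDeriv j κ1 t = 0 ∧ iteratedDeriv j κ2 t = 0))
    ∧ ((∀ j : ℕ, j + 2 ≤ s → iteratedDeriv j κ1 t = 0 ∧ iteratedDeriv j κ2 t = 0) →
        iteratedDeriv (s + 1) γ t
          = iteratedDeriv (s - 1) κ1 t • e2 t + iteratedDeriv (s - 1) κ2 t • e3 t) := by
  -- inner product facts
  have hite := fun u => orthonormal_iff_ite.mp (hON u)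
  have h12 : ⟪e1 t, e2 t⟫ = 0 := by simpa using hite t 0 1
  have h13 : ⟪e1 t, e3 t⟫ = 0 := by simpa using hite t 0 2
  have h22 : ⟪e2 t, e2 t⟫ = 1 := by simpa using hite t 1 1
  have h32 : ⟪e3 t, e2 t⟫ = 0 := by simpa using hite t 2 1
  have h23 : ⟪e2 t, e3 t⟫ = 0 := by simpa using hite t 1 2
  have h33 : ⟪e3 t, e3 t⟫ = 1 := by simpa using hite t 2 2
  have he1ne : e1 t ≠ 0 := by
    have h11 : ⟪e1 t, e1 t⟫ = 1 := by simpa using hite t 0 0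
    intro h
    rw [h] at h11
    simp at h11
  have hd1 : iteratedDeriv 1 γ t = e1 t := by
    rw [iteratedDeriv_one, he1]
  -- derivative chain
  have hγ2 : ∀ k : ℕ, iteratedDeriv (k+2) γ
      = iteratedDeriv k (fun y => κ1 y • e2 y + κ2 y • e3 y) := by
    intro k
    have : iteratedDeriv (k+2) γ = iteratedDeriv (k+1) (deriv γ) := iteratedDeriv_succ'
    rw [this, ← he1, iteratedDeriv_succ']
    have hde1 : deriv e1 = fun y => κ1 y • e2 y + κ2 y • e3 y := funext hE1
    rw [hde1]
  -- key reduced lemma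
  have hR : ∀ j : ℕ,
      (∀ m, m < j → iteratedDeriv m κ1 t = 0 ∧ iteratedDeriv m κ2 t = 0) →
      iteratedDeriv (j+2) γ t
        = iteratedDeriv j κ1 t • e2 t + iteratedDeriv j κ2 t • e3 t := by
    intro j hm
    rw [congrFun (hγ2 j) t,
      iteratedDeriv_add' (f := fun y => κ1 y • e2 y) (g := fun y => κ2 y • e3 y) (hκ1s.smul he2s) (hκ2s.smul he3s) j t,
      leibniz_smul j κ1 e2 hκ1s he2s t, leibniz_smul j κ2 e3 hκ2s he3s t,
      Finset.sum_range_succ, Finset.sum_range_succ]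
    have hz1 : ∑ m ∈ Finset.range j,
        (j.choose m : ℝ) • (iteratedDeriv m κ1 t • iteratedDeriv (j-m) e2 t) = 0 :=
      Finset.sum_eq_zero fun m hm' => by
        rw [(hm m (Finset.mem_range.mp hm')).1]; simp
    have hz2 : ∑ m ∈ Finset.range j,
        (j.choose m : ℝ) • (iteratedDeriv m κ2 t • iteratedDeriv (j-m) e3 t) = 0 :=
      Finset.sum_eq_zero fun m hm' => by
        rw [(hm m (Finset.mem_range.mp hm')).2]; simp
    rw [hz1, hz2]
    simp [Nat.sub_self]
  constructor
  · constructor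
    · -- (a) → (b)
      intro ha j
      induction j using Nat.strong_induction_on with
      | _ j IH =>
        intro hj
        have hRj := hR j (fun m hm => IH m hm (by omega))
        have hmem : iteratedDeriv (j+2) γ t ∈ Submodule.span ℝ {e1 t} := by
          set S := (fun k => iteratedDeriv k γ t) '' Set.Icc 1 (j+2) with hS
          have hfin : Module.finrank ℝ (Submodule.span ℝ S) = 1 := ha (j+2) (by omega) hj
          have he1mem : e1 t ∈ S := ⟨1, ⟨le_refl 1, by omega⟩, hd1⟩
          have hsub : Submodule.span ℝ {e1 t} ≤ Submodule.span ℝ S :=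
            Submodule.span_mono (Set.singleton_subset_iff.mpr he1mem)
          have heq : Submodule.span ℝ {e1 t} = Submodule.span ℝ S := by
            apply Submodule.eq_of_le_of_finrank_le hsub
            rw [hfin, finrank_span_singleton he1ne]
          rw [heq]
          exact Submodule.subset_span ⟨j+2, ⟨by omega, le_refl _⟩, rfl⟩
        obtain ⟨c, hc⟩ := Submodule.mem_span_singleton.mp hmem
        have hip2 : ⟪iteratedDeriv (j+2) γ t, e2 t⟫ = iteratedDeriv j κ1 t := by
          rw [hRj, inner_add_left, real_inner_smul_left, real_inner_smul_left, h22, h32]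
          ring
        have hip3 : ⟪iteratedDeriv (j+2) γ t, e3 t⟫ = iteratedDeriv j κ2 t := by
          rw [hRj, inner_add_left, real_inner_smul_left, real_inner_smul_left, h23, h33]
          ring
        constructor
        · rw [← hip2, ← hc, real_inner_smul_left, h12, mul_zero]
        · rw [← hip3, ← hc, real_inner_smul_left, h13, mul_zero]
    · -- (b) → (a)
      intro hb i h1i his
      have hzero : ∀ k, 2 ≤ k → k ≤ s → iteratedDeriv k γ t = 0 := by
        intro k h2k hks
        obtain ⟨j, rfl⟩ : ∃ j, k = j + 2 := ⟨k-2, by omega⟩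
        rw [hR j (fun m hm => hb m (by omega)),
          (hb j (by omega)).1, (hb j (by omega)).2]
        simp
      have heq : Submodule.span ℝ ((fun k => iteratedDeriv k γ t) '' Set.Icc 1 i)
          = Submodule.span ℝ {e1 t} := by
        apply le_antisymm
        · rw [Submodule.span_le]
          rintro v ⟨k, ⟨hk1, hki⟩, rfl⟩
          rcases eq_or_lt_of_le hk1 with h | h
          · rw [← h]
            simpa [hd1] using Submodule.mem_span_singleton_self (e1 t)
          · have : iteratedDeriv k γ t = 0 := hzero k h (le_trans hki his)
            simp [this]
        · exact Submodule.span_mono (Set.singleton_subset_iff.mpr ⟨1, ⟨le_refl 1, h1i⟩, hd1⟩)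
      rw [heq, finrank_span_singleton he1ne]
  · -- the formula
    intro hb
    have hse : s + 1 = (s - 1) + 2 := by omega
    rw [hse]
    exact hR (s-1) (fun m hm => hb m (by omega))
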